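/- Let $M$ be the standard Gaussian density on $\mathbb{R}^n$ and let $f: \mathbb{R}^n \to \mathbb{R}$ be twice continuously differentiable with Hessian uniformly bounded in operator norm. Then there exists $\rho > 0$ such that $\int (\cosh(\rho f(x)) - 1) M(x)\,dx < \infty$; in particular $f$ belongs to the exponential Orlicz space $L^{(\cosh-1)}(M)$. -/

import Mathlib

open MeasureTheory Real Filter Topology
open scoped ENNReal

noncomputable def gaussM (n : ℕ) (x : EuclideanSpace ℝ (Fin n)) : ℝ :=
  (2 * π) ^ (-(n : ℝ) / 2) * Real.exp (-‖x‖ ^ 2 / 2)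

noncomputable def orliczInt (n : ℕ) (ρ : ℝ) (f : EuclideanSpace ℝ (Fin n) → ℝ) : ℝ≥0∞ :=
  ∫⁻ x, ENNReal.ofReal (Real.cosh (ρ * f x) - 1) * ENNReal.ofReal (gaussM n x)

def MemLexp (n : ℕ) (f : EuclideanSpace ℝ (Fin n) → ℝ) : Prop :=
  ∃ ρ > 0, orliczInt n ρ f < ⊤

noncomputable def luxNorm (n : ℕ) (f : EuclideanSpace ℝ (Fin n) → ℝ) : ℝ :=
  sInf {c : ℝ | 0 < c ∧ orliczInt n (1 / c) f ≤ 1}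

noncomputable def coshStar (y : ℝ) : ℝ := ⨆ u : ℝ, (u * y - (Real.cosh u - 1))

lemma cosh_le_exp_abs (t : ℝ) : Real.cosh t ≤ Real.exp |t| := by
  rw [Real.cosh_eq]
  have h1 : Real.exp t ≤ Real.exp |t| := Real.exp_le_exp.2 (le_abs_self t)
  have h2 : Real.exp (-t) ≤ Real.exp |t| := Real.exp_le_exp.2 (neg_le_abs t)
  linarith

theorem memLexp_of_bounded_hessian (n : ℕ) (f : EuclideanSpace ℝ (Fin n) → ℝ)
    (hf : ContDiff ℝ 2 f) (C : ℝ) (hC : ∀ x, ‖iteratedFDeriv ℝ 2 f x‖ ≤ C) :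
    (∃ ρ > 0, orliczInt n ρ f < ⊤) ∧ MemLexp n f := by
  have hC0 : 0 ≤ C := le_trans (norm_nonneg _) (hC 0)
  -- the first derivative is C-Lipschitz
  set G := iteratedFDeriv ℝ 1 f with hG
  have hGdiff : Differentiable ℝ G := by
    have : ContDiff ℝ 1 G := hf.iteratedFDeriv_right (i := 1) (by norm_num)
    exact this.differentiable (by norm_num)
  have hGlip : ∀ x y : EuclideanSpace ℝ (Fin n), ‖G y - G x‖ ≤ C * ‖y - x‖ := by
    intro x y
    refine convex_univ.norm_image_sub_le_of_norm_fderiv_le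
      (fun z _ => (hGdiff z)) (fun z _ => ?_) trivial trivial
    rw [hG, norm_fderiv_iteratedFDeriv]
    exact hC z
  have hnormG : ∀ x, ‖fderiv ℝ f x‖ = ‖G x‖ := by
    intro x
    rw [hG, ← norm_iteratedFDeriv_fderiv (n := 0), norm_iteratedFDeriv_zero]
  set B : ℝ := ‖fderiv ℝ f 0‖ + C + 1 with hBdef
  set A : ℝ := |f 0| + ‖fderiv ℝ f 0‖ with hAdef
  have hA0 : 0 ≤ A := by positivity
  have hB0 : 0 < B := by positivity
  -- quadratic growth bound
  have hquad : ∀ x, |f x| ≤ A + B * ‖x‖ ^ 2 := by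
    intro x
    have hder : ∀ y : EuclideanSpace ℝ (Fin n), y ∈ Metric.closedBall (0 : EuclideanSpace ℝ (Fin n)) ‖x‖ →
        ‖fderiv ℝ f y‖ ≤ ‖fderiv ℝ f 0‖ + C * ‖x‖ := by
      intro y hy
      have h1 : ‖G y - G 0‖ ≤ C * ‖y‖ := by simpa using hGlip 0 y
      have h2 : ‖G y‖ ≤ ‖G 0‖ + C * ‖y‖ := by
        have := norm_sub_norm_le (G y) (G 0)
        linarith
      have hy' : ‖y‖ ≤ ‖x‖ := by simpa [Metric.mem_closedBall, dist_zero_right] using hy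
      have : C * ‖y‖ ≤ C * ‖x‖ := mul_le_mul_of_nonneg_left hy' hC0
      rw [hnormG y, hnormG 0] at *
      linarith
    have hmv : ‖f x - f 0‖ ≤ (‖fderiv ℝ f 0‖ + C * ‖x‖) * ‖x - 0‖ := by
      refine (convex_closedBall (0 : EuclideanSpace ℝ (Fin n)) ‖x‖).norm_image_sub_le_of_norm_fderiv_le
        (fun z _ => (hf.differentiable (by norm_num)) z) hder ?_ ?_
      · simp
      · simp [Metric.mem_closedBall]
    rw [sub_zero] at hmv
    have habs : |f x| ≤ |f 0| + (‖fderiv ℝ f 0‖ + C * ‖x‖) * ‖x‖ := by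
      have := abs_sub_abs_le_abs_sub (f x) (f 0)
      have h' : |f x - f 0| ≤ (‖fderiv ℝ f 0‖ + C * ‖x‖) * ‖x‖ := hmv
      linarith
    have hx1 : ‖x‖ ≤ 1 + ‖x‖ ^ 2 := by nlinarith [norm_nonneg x, sq_nonneg (‖x‖ - 1)]
    have hxn : (0:ℝ) ≤ ‖x‖ := norm_nonneg x
    calc |f x| ≤ |f 0| + ‖fderiv ℝ f 0‖ * ‖x‖ + C * ‖x‖ ^ 2 := by nlinarith
      _ ≤ A + B * ‖x‖ ^ 2 := by
          have : ‖fderiv ℝ f 0‖ * ‖x‖ ≤ ‖fderiv ℝ f 0‖ * (1 + ‖x‖ ^ 2) :=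
            mul_le_mul_of_nonneg_left hx1 (norm_nonneg _)
          rw [hAdef, hBdef]; nlinarith [norm_nonneg (fderiv ℝ f 0), sq_nonneg ‖x‖]
  -- choose ρ
  set ρ : ℝ := 1 / (4 * B) with hρdef
  have hρ0 : 0 < ρ := by positivity
  have hρB : ρ * B = 1 / 4 := by rw [hρdef]; field_simp
  -- the dominating integrable function
  set c : ℝ := (2 * π) ^ (-(n : ℝ) / 2) with hcdef
  have hc0 : 0 < c := by
    rw [hcdef]; exact Real.rpow_pos_of_pos (by positivity) _
  set K : ℝ := c * Real.exp (ρ * A) with hKdef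
  have hInt : Integrable (fun v : EuclideanSpace ℝ (Fin n) ↦ Real.exp (-(1/4) * ‖v‖ ^ 2)) := by
    have h := (GaussianFourier.integrable_cexp_neg_mul_sq_norm_add
      (b := ((1:ℂ)/4)) (by norm_num) 0 (0 : EuclideanSpace ℝ (Fin n))).norm
    have heq : ∀ v : EuclideanSpace ℝ (Fin n),
        ‖Complex.exp (-(1/4 : ℂ) * (‖v‖:ℂ) ^ 2 + 0 * (inner ℝ (0 : EuclideanSpace ℝ (Fin n)) v : ℝ))‖
          = Real.exp (-(1/4) * ‖v‖ ^ 2) := by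
      intro v
      have hz : (-(1/4 : ℂ) * (‖v‖:ℂ) ^ 2 + 0 * ((inner ℝ (0 : EuclideanSpace ℝ (Fin n)) v : ℝ) : ℂ))
          = ((-(1/4) * ‖v‖ ^ 2 : ℝ) : ℂ) := by push_cast; ring
      rw [hz, Complex.norm_exp, Complex.ofReal_re]
    exact h.congr (Filter.Eventually.of_forall fun v => (heq v))
  have hIK : Integrable (fun v : EuclideanSpace ℝ (Fin n) ↦ K * Real.exp (-(1/4) * ‖v‖ ^ 2)) :=
    hInt.const_mul K
  -- pointwise bound
  have hpt : ∀ x : EuclideanSpace ℝ (Fin n),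
      ENNReal.ofReal (Real.cosh (ρ * f x) - 1) * ENNReal.ofReal (gaussM n x)
        ≤ ‖K * Real.exp (-(1/4) * ‖x‖ ^ 2)‖₊ := by
    intro x
    have h1 : 0 ≤ Real.cosh (ρ * f x) - 1 := by linarith [Real.one_le_cosh (ρ * f x)]
    rw [← ENNReal.ofReal_mul h1]
    refine le_trans (ENNReal.ofReal_le_ofReal ?_) (Real.ofReal_le_enorm _)
    have habs : |ρ * f x| ≤ ρ * A + (1/4) * ‖x‖ ^ 2 := by
      rw [abs_mul, abs_of_pos hρ0]
      have := hquad x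
      have h2 : ρ * |f x| ≤ ρ * (A + B * ‖x‖ ^ 2) := mul_le_mul_of_nonneg_left this hρ0.le
      have h3 : ρ * (A + B * ‖x‖ ^ 2) = ρ * A + (ρ * B) * ‖x‖ ^ 2 := by ring
      rw [h3, hρB] at h2
      exact h2
    have hcosh : Real.cosh (ρ * f x) - 1 ≤ Real.exp (ρ * A + (1/4) * ‖x‖ ^ 2) := by
      have := cosh_le_exp_abs (ρ * f x)
      have := Real.exp_le_exp.2 habs
      linarith
    have hgauss : gaussM n x = c * Real.exp (-‖x‖ ^ 2 / 2) := rfl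
    have hexp0 : (0:ℝ) < Real.exp (-‖x‖ ^ 2 / 2) := Real.exp_pos _
    calc (Real.cosh (ρ * f x) - 1) * gaussM n x
        ≤ Real.exp (ρ * A + (1/4) * ‖x‖ ^ 2) * (c * Real.exp (-‖x‖ ^ 2 / 2)) := by
          rw [hgauss]
          exact mul_le_mul_of_nonneg_right hcosh (by positivity)
      _ = K * Real.exp (-(1/4) * ‖x‖ ^ 2) := by
          have hcomb : ∀ a b : ℝ, Real.exp a * (c * Real.exp b) = c * Real.exp (a + b) := by
            intro a b; rw [Real.exp_add]; ring
          rw [hcomb, hKdef, mul_assoc, ← Real.exp_add]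
          congr 1
          ring
  have hfin : orliczInt n ρ f < ⊤ := by
    have hle : orliczInt n ρ f ≤ ∫⁻ x, ‖K * Real.exp (-(1/4) * ‖x‖ ^ 2)‖₊ :=
      lintegral_mono hpt
    exact lt_of_le_of_lt hle hIK.hasFiniteIntegral
  exact ⟨⟨ρ, hρ0, hfin⟩, ⟨ρ, hρ0, hfin⟩⟩
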